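/- Let m be a nonnegative integer such that the Fermat number F_m = 2^(2^m) + 1 is prime, and let k be an even positive integer with gcd(F_m, k) = 1. Then n = 2^(2^m)·k satisfies φ(n+k) = φ(n), where φ denotes Euler's totient function. -/
import Mathlib

theorem fermat_prime_solution_even_k
    (m k : ℕ) (hF : Nat.Prime (2 ^ 2 ^ m + 1))
    (hk : 0 < k) (hke : Even k) (hcop : Nat.gcd (2 ^ 2 ^ m + 1) k = 1) :
    Nat.totient (2 ^ 2 ^ m * k + k) = Nat.totient (2 ^ 2 ^ m * k) := by
  obtain ⟨c, hc⟩ := hke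
  have h2k : 2 ∣ k := ⟨c, by omega⟩
  have key : ∀ a : ℕ, Nat.totient (2 ^ a * k) = 2 ^ a * Nat.totient k := by
    intro a
    induction a with
    | zero => simp
    | succ n ih =>
      have hd : 2 ∣ 2 ^ n * k := Dvd.dvd.mul_left h2k _
      calc Nat.totient (2 ^ (n+1) * k) = Nat.totient (2 * (2 ^ n * k)) := by ring_nf
        _ = 2 * Nat.totient (2 ^ n * k) :=
            Nat.totient_mul_of_prime_of_dvd Nat.prime_two hd
        _ = 2 ^ (n+1) * Nat.totient k := by rw [ih]; ring
  have h1 : 2 ^ 2 ^ m * k + k = (2 ^ 2 ^ m + 1) * k := by ring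
  rw [h1, Nat.totient_mul hcop, Nat.totient_prime hF, key]
  simp
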